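/- Let y ∈ ℝ^p, let d₁,…,d_p be positive numbers with D = diag(d₁,…,d_p), let λ₁ ≥ … ≥ λ_p ≥ 0, and let b* be the unique minimizer of f(b) = ½‖y − Db‖₂² + J_λ(b) over ℝ^p. Let π be a permutation of {1,…,p} that places the components of the vector (d₁|y₁|,…,d_p|y_p|) in nonincreasing order, i.e. d_{π(1)}|y_{π(1)}| ≥ … ≥ d_{π(p)}|y_{π(p)}|. If b* has exactly r nonzero entries with r > 0, then the support of b* is exactly the set {π(1),…,π(r)}. -/
import Mathlib


/-- The nonincreasing rearrangement of the absolute values of the coordinates of `b`. -/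
noncomputable def sortedAbs {p : ℕ} (b : Fin p → ℝ) : Fin p → ℝ :=
  fun i => |b (Tuple.sort (fun j => |b j|) (Fin.rev i))|

/-- The sorted ℓ₁ norm `J_λ(b) = Σ_i λ_i |b|_{(i)}`. -/
noncomputable def Jlam {p : ℕ} (lam b : Fin p → ℝ) : ℝ :=
  ∑ i, lam i * sortedAbs b i

/-- The SLOPE objective with diagonal design matrix `D = diag(d₁,…,d_p)`:
`f(b) = ½ ‖y − D b‖₂² + J_λ(b)`. -/
noncomputable def slopeObj {p : ℕ} (d y lam : Fin p → ℝ) (b : Fin p → ℝ) : ℝ :=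
  (1 / 2) * ∑ i, (y i - d i * b i) ^ 2 + Jlam lam b

namespace SlopeAux

variable {p : ℕ}

/-- The permutation that sorts `|b|` in nonincreasing order. -/
noncomputable def sortPerm (b : Fin p → ℝ) : Equiv.Perm (Fin p) :=
  Fin.revPerm.trans (Tuple.sort fun j => |b j|)

lemma sortedAbs_apply (b : Fin p → ℝ) (k : Fin p) :
    sortedAbs b k = |b (sortPerm b k)| := rfl

lemma sortedAbs_antitone (b : Fin p → ℝ) : Antitone (sortedAbs b) := by
  intro k l hkl
  have h := Tuple.monotone_sort (fun j => |b j|) (Fin.rev_le_rev.mpr hkl)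
  simpa [sortedAbs, Function.comp] using h

lemma Jlam_eq (lam b : Fin p → ℝ) :
    Jlam lam b = ∑ k, lam k * |b (sortPerm b k)| := rfl

/-- Rearrangement bound: any permutation pairing of `lam` with `|b|` is at most `Jlam`. -/
lemma sum_perm_le (lam b : Fin p → ℝ)
    (hlam_anti : ∀ i j : Fin p, i ≤ j → lam j ≤ lam i)
    (σ : Equiv.Perm (Fin p)) :
    ∑ k, lam k * |b (σ k)| ≤ Jlam lam b := by
  have hmono : Monovary lam (sortedAbs b) := by
    intro i j hij
    rcases le_total i j with h | h
    · exact absurd (sortedAbs_antitone b h) (not_le.mpr hij)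
    · exact hlam_anti _ _ h
  have key := hmono.sum_mul_comp_perm_le_sum_mul (σ := σ.trans (sortPerm b).symm)
  calc ∑ k, lam k * |b (σ k)|
      = ∑ k, lam k * sortedAbs b ((σ.trans (sortPerm b).symm) k) := by
        refine Finset.sum_congr rfl fun k _ => ?_
        rw [sortedAbs_apply]
        simp
    _ ≤ ∑ k, lam k * sortedAbs b k := key
    _ = Jlam lam b := rfl

/-- The nonzero entries of the sorted vector occupy exactly the first `r` slots,
where `r` is the number of nonzero entries of `b`. -/
lemma sortedAbs_support (b : Fin p → ℝ) :
    {k : Fin p | sortedAbs b k ≠ 0}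
      = {k : Fin p | (k : ℕ) < {i : Fin p | b i ≠ 0}.ncard} := by
  set r' := {i : Fin p | b i ≠ 0}.ncard with hr'
  have hT : {k : Fin p | sortedAbs b k ≠ 0}
      = (sortPerm b).symm '' {i : Fin p | b i ≠ 0} := by
    ext k
    simp only [Set.mem_setOf_eq, Set.mem_image, sortedAbs_apply, abs_ne_zero]
    constructor
    · intro h
      exact ⟨sortPerm b k, h, by simp⟩
    · rintro ⟨m, hm, rfl⟩
      simpa using hm
  have hTcard : {k : Fin p | sortedAbs b k ≠ 0}.ncard = r' := by
    rw [hT]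
    exact Set.ncard_image_of_injective _ (Equiv.injective _)
  have hr'le : r' ≤ p := by
    have h := Set.ncard_le_ncard (Set.subset_univ {i : Fin p | b i ≠ 0}) (Set.toFinite _)
    simpa [Set.ncard_univ] using h
  have hsub : {k : Fin p | sortedAbs b k ≠ 0} ⊆ {k : Fin p | (k : ℕ) < r'} := by
    intro k hk
    simp only [Set.mem_setOf_eq] at hk ⊢
    by_contra hlt
    push_neg at hlt
    have hIic : Set.Iic k ⊆ {k : Fin p | sortedAbs b k ≠ 0} := by
      intro l hl
      simp only [Set.mem_setOf_eq]
      have h1 : sortedAbs b k ≤ sortedAbs b l := sortedAbs_antitone b hl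
      have h2 : 0 ≤ sortedAbs b k := by rw [sortedAbs_apply]; exact abs_nonneg _
      intro h0
      rw [h0] at h1
      exact hk (le_antisymm h1 h2)
    have hle : (Set.Iic k).ncard ≤ r' := by
      rw [← hTcard]
      exact Set.ncard_le_ncard hIic (Set.toFinite _)
    have hIicCard : (Set.Iic k).ncard = (k : ℕ) + 1 := by
      rw [← Finset.coe_Iic, Set.ncard_coe_finset, Fin.card_Iic]
    omega
  have hIcard : {k : Fin p | (k : ℕ) < r'}.ncard = r' := by
    have hrange : {k : Fin p | (k : ℕ) < r'} = Set.range (Fin.castLE hr'le) := by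
      ext k
      simp [Fin.range_castLE]
    rw [hrange, ← Set.image_univ,
      Set.ncard_image_of_injective _ (Fin.castLE_injective hr'le), Set.ncard_univ,
      Nat.card_eq_fintype_card, Fintype.card_fin]
  exact Set.eq_of_subset_of_ncard_le hsub (by rw [hTcard, hIcard]) (Set.toFinite _)

lemma quad_update (d y g : Fin p → ℝ) (j : Fin p) (v : ℝ) :
    ∑ k, (y k - d k * Function.update g j v k) ^ 2
      - ∑ k, (y k - d k * g k) ^ 2
      = (y j - d j * v) ^ 2 - (y j - d j * g j) ^ 2 := by
  rw [← Finset.sum_sub_distrib, Finset.sum_eq_single j]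
  · rw [Function.update_self]
  · intro k _ hk
    rw [Function.update_of_ne hk]
    ring
  · simp

lemma Jlam_update_le (lam g : Fin p → ℝ)
    (hlam_anti : ∀ i j : Fin p, i ≤ j → lam j ≤ lam i)
    (j : Fin p) (v : ℝ) :
    Jlam lam (Function.update g j v)
      ≤ lam ((sortPerm (Function.update g j v)).symm j) * (|v| - |g j|)
        + Jlam lam g := by
  set u := Function.update g j v with hu
  set e := sortPerm u with he
  have h1 : Jlam lam u = ∑ k, lam k * |u (e k)| := rfl
  have h2 : ∑ k, lam k * |u (e k)| - ∑ k, lam k * |g (e k)|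
      = lam (e.symm j) * (|v| - |g j|) := by
    rw [← Finset.sum_sub_distrib, Finset.sum_eq_single (e.symm j)]
    · rw [Equiv.apply_symm_apply, hu, Function.update_self]
      ring
    · intro k _ hk
      have hne : e k ≠ j := fun h => hk (by rw [← h]; simp)
      rw [hu, Function.update_of_ne hne]
      ring
    · simp
  have h3 : ∑ k, lam k * |g (e k)| ≤ Jlam lam g := sum_perm_le lam g hlam_anti e
  linarith

/-- Basic optimality inequality for a single-coordinate perturbation of the minimizer. -/
lemma key_ineq (d y lam : Fin p → ℝ)
    (hlam_anti : ∀ i j : Fin p, i ≤ j → lam j ≤ lam i)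
    (bstar : Fin p → ℝ)
    (hbstar : ∀ b, slopeObj d y lam bstar ≤ slopeObj d y lam b)
    (j : Fin p) (v : ℝ) :
    0 ≤ (1 / 2) * (y j - d j * v) ^ 2 - (1 / 2) * (y j - d j * bstar j) ^ 2
        + lam ((sortPerm (Function.update bstar j v)).symm j) * (|v| - |bstar j|) := by
  have h := hbstar (Function.update bstar j v)
  unfold slopeObj at h
  have hq := quad_update d y bstar j v
  have hJ := Jlam_update_le lam bstar hlam_anti j v
  linarith

lemma arithF (di yi a t Λ lc : ℝ) (hdi : 0 < di) (ht : 0 < t) (hta : |a| = t)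
    (hΛc : Λ ≤ lc)
    (hkey : 0 ≤ 1 / 2 * (yi - di * (a / 2)) ^ 2 - 1 / 2 * (yi - di * a) ^ 2
      + lc * (t / 2 - t)) :
    Λ + 3 / 4 * di ^ 2 * t ≤ di * |yi| := by
  have h1 : a * yi ≤ t * |yi| := by
    calc a * yi ≤ |a * yi| := le_abs_self _
      _ = t * |yi| := by rw [abs_mul, hta]
  have h2 : a ^ 2 = t ^ 2 := by rw [← hta, sq_abs]
  have h3 : lc * (t / 2 - t) ≤ Λ * (t / 2 - t) := by nlinarith
  have h4 : Λ * (t / 2) ≤ 1 / 2 * di * (a * yi) - 3 / 8 * di ^ 2 * a ^ 2 := by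
    nlinarith [hkey, h3]
  have h5 : 1 / 2 * di * (a * yi) ≤ 1 / 2 * di * (t * |yi|) := by nlinarith [h1, hdi]
  have h6 : (Λ + 3 / 4 * di ^ 2 * t) * (t / 2) ≤ di * |yi| * (t / 2) := by
    nlinarith [h4, h5, h2]
  exact le_of_mul_le_mul_right h6 (by linarith)

lemma arithE (dj yj s Λ lc σ : ℝ) (hdj : 0 < dj) (hs : 0 < s)
    (hσy : σ * yj = |yj|) (hσsq : σ ^ 2 = 1) (hΛc : lc ≤ Λ)
    (hkey : 0 ≤ 1 / 2 * (yj - dj * (σ * s)) ^ 2 - 1 / 2 * yj ^ 2 + lc * s) :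
    dj * |yj| ≤ Λ + 1 / 2 * dj ^ 2 * s := by
  have h1 : (yj - dj * (σ * s)) ^ 2
      = yj ^ 2 - 2 * dj * s * (σ * yj) + dj ^ 2 * s ^ 2 * σ ^ 2 := by ring
  rw [h1, hσy, hσsq] at hkey
  have h2 : lc * s ≤ Λ * s := by nlinarith
  have h3 : dj * |yj| * s ≤ (Λ + 1 / 2 * dj ^ 2 * s) * s := by nlinarith [hkey, h2]
  exact le_of_mul_le_mul_right h3 hs

lemma arithFinal (A B Λ di dj s t : ℝ) (hdi : 0 < di) (ht : 0 < t)
    (hF : Λ + 3 / 4 * di ^ 2 * t ≤ A) (hAB : A ≤ B)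
    (hE : B ≤ Λ + 1 / 2 * dj ^ 2 * s)
    (hdjs : dj ^ 2 * s ≤ di ^ 2 * t / 4) : False := by
  have hX : 0 < di ^ 2 * t := by positivity
  linarith

end SlopeAux

open SlopeAux in
/-- If the minimizer `b*` of the diagonal SLOPE objective has exactly `r > 0` nonzero entries
and `π` is a permutation placing `(d₁|y₁|, …, d_p|y_p|)` in nonincreasing order, then the
support of `b*` is exactly `{π(1),…,π(r)}`. -/
theorem slope_support_perm {p : ℕ} (d y lam : Fin p → ℝ)
    (hd : ∀ i, 0 < d i)
    (hlam_anti : ∀ i j : Fin p, i ≤ j → lam j ≤ lam i)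
    (hlam_nonneg : ∀ i, 0 ≤ lam i)
    (π : Equiv.Perm (Fin p))
    (hπ : ∀ i j : Fin p, i ≤ j → d (π j) * |y (π j)| ≤ d (π i) * |y (π i)|)
    (bstar : Fin p → ℝ)
    (hbstar : ∀ b, slopeObj d y lam bstar ≤ slopeObj d y lam b)
    (r : ℕ) (hr : 0 < r)
    (hcard : {i : Fin p | bstar i ≠ 0}.ncard = r) :
    {i : Fin p | bstar i ≠ 0} = {i : Fin p | ∃ k : Fin p, (k : ℕ) < r ∧ π k = i} := by
  classical
  set S := {i : Fin p | bstar i ≠ 0} with hS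
  set T := {i : Fin p | ∃ k : Fin p, (k : ℕ) < r ∧ π k = i} with hT
  have hrp_le : r ≤ p := by
    rw [← hcard]
    have h := Set.ncard_le_ncard (Set.subset_univ S) (Set.toFinite _)
    simpa [Set.ncard_univ] using h
  have hTim : T = π '' {k : Fin p | (k : ℕ) < r} := by
    ext i
    exact ⟨fun ⟨k, h1, h2⟩ => ⟨k, h1, h2⟩, fun ⟨k, h1, h2⟩ => ⟨k, h1, h2⟩⟩
  have hTcard : T.ncard = r := by
    rw [hTim, Set.ncard_image_of_injective _ π.injective]
    have hrange : {k : Fin p | (k : ℕ) < r} = Set.range (Fin.castLE hrp_le) := by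
      ext k
      simp [Fin.range_castLE]
    rw [hrange, ← Set.image_univ,
      Set.ncard_image_of_injective _ (Fin.castLE_injective hrp_le), Set.ncard_univ,
      Nat.card_eq_fintype_card, Fintype.card_fin]
  by_contra hne
  have hSniT : ¬ S ⊆ T := fun h =>
    hne (Set.eq_of_subset_of_ncard_le h (by rw [hTcard, hcard]) (Set.toFinite _))
  have hTniS : ¬ T ⊆ S := fun h =>
    hne ((Set.eq_of_subset_of_ncard_le h (by rw [hTcard, hcard]) (Set.toFinite _)).symm)
  obtain ⟨i, hiS, hiT⟩ := Set.not_subset.mp hSniT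
  obtain ⟨j, hjT, hjS⟩ := Set.not_subset.mp hTniS
  have hiS' : bstar i ≠ 0 := hiS
  have hjS' : bstar j = 0 := not_not.mp hjS
  -- r < p
  have hrltp : r < p := by
    have h1 : (insert j S).ncard = r + 1 := by
      rw [Set.ncard_insert_of_notMem hjS (Set.toFinite _), hcard]
    have h2 : (insert j S).ncard ≤ p := by
      have h := Set.ncard_le_ncard (Set.subset_univ (insert j S)) (Set.toFinite _)
      simpa [Set.ncard_univ] using h
    omega
  set Λ := lam ⟨r, hrltp⟩ with hΛ
  -- A ≤ B
  obtain ⟨kj, hkj, hkjπ⟩ := hjT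
  have hki : r ≤ ((π.symm i : Fin p) : ℕ) := by
    by_contra h
    push_neg at h
    exact hiT ⟨π.symm i, h, by simp⟩
  have hAB : d i * |y i| ≤ d j * |y j| := by
    have hle : kj ≤ π.symm i := by
      rw [Fin.le_def]; omega
    have h := hπ kj (π.symm i) hle
    rw [hkjπ] at h
    simpa using h
  -- minimum nonzero magnitude
  have hSfin : S.Finite := Set.toFinite _
  have hFne : hSfin.toFinset.Nonempty := by
    rw [Set.Finite.toFinset_nonempty]
    exact ⟨i, hiS⟩
  set m := hSfin.toFinset.inf' hFne (fun k => |bstar k|) with hm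
  have hm_pos : 0 < m := by
    rw [hm, Finset.lt_inf'_iff]
    intro k hk
    rw [Set.Finite.mem_toFinset] at hk
    exact abs_pos.mpr hk
  have hm_le : ∀ k : Fin p, bstar k ≠ 0 → m ≤ |bstar k| := by
    intro k hk
    exact Finset.inf'_le _ (by rw [Set.Finite.mem_toFinset]; exact hk)
  set t := |bstar i| with htdef
  have ht : 0 < t := abs_pos.mpr hiS'
  ------------------------------------------------------------------
  -- Part F : d i * |y i| ≥ Λ + (3/4) * (d i)^2 * t
  ------------------------------------------------------------------
  have hF : Λ + 3 / 4 * (d i) ^ 2 * t ≤ d i * |y i| := by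
    set u := Function.update bstar i (bstar i / 2) with hu
    set c := (sortPerm u).symm i with hc
    have hsupp : {k : Fin p | u k ≠ 0} = S := by
      ext k
      simp only [Set.mem_setOf_eq, hu, Function.update_apply, hS]
      split_ifs with hki'
      · subst hki'
        constructor
        · intro _; exact hiS'
        · intro _; exact div_ne_zero hiS' two_ne_zero
      · rfl
    have hcard_u : {k : Fin p | u k ≠ 0}.ncard = r := by rw [hsupp]; exact hcard
    have hval : sortedAbs u c = |bstar i / 2| := by
      rw [sortedAbs_apply, hc, Equiv.apply_symm_apply, hu, Function.update_self]
    have hclt : (c : ℕ) < r := by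
      have hmem : c ∈ {k : Fin p | sortedAbs u k ≠ 0} := by
        simp only [Set.mem_setOf_eq, hval, abs_ne_zero]
        exact div_ne_zero hiS' two_ne_zero
      rw [sortedAbs_support, hcard_u] at hmem
      exact hmem
    have hΛc : Λ ≤ lam c := by
      apply hlam_anti
      rw [Fin.le_def]
      simpa using hclt.le
    have hkey := key_ineq d y lam hlam_anti bstar hbstar i (bstar i / 2)
    rw [← hu, ← hc] at hkey
    have habs2 : |bstar i / 2| = t / 2 := by
      rw [abs_div, htdef]
      norm_num
    rw [habs2, ← htdef] at hkey
    exact arithF (d i) (y i) (bstar i) t Λ (lam c) (hd i) ht htdef.symm hΛc hkey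
  ------------------------------------------------------------------
  -- Part E : d j * |y j| ≤ Λ + (1/2) * (d j)^2 * s  for small s
  ------------------------------------------------------------------
  set s := min (m / 2) ((d i) ^ 2 * t / (4 * (d j) ^ 2)) with hsdef
  have hdj : 0 < d j := hd j
  have hs_pos : 0 < s := by
    apply lt_min
    · linarith
    · exact div_pos (mul_pos (pow_pos (hd i) 2) ht) (by positivity)
  have hs_lt_m : s < m := lt_of_le_of_lt (min_le_left _ _) (by linarith)
  have hs_le : s ≤ (d i) ^ 2 * t / (4 * (d j) ^ 2) := min_le_right _ _
  set σs : ℝ := if 0 ≤ y j then 1 else -1 with hσ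
  have hσ_abs : |σs * s| = s := by
    rw [abs_mul]
    rw [hσ]
    split_ifs <;> simp [abs_of_pos hs_pos]
  have hσy : σs * y j = |y j| := by
    rw [hσ]
    split_ifs with h
    · rw [abs_of_nonneg h]; ring
    · rw [abs_of_neg (not_le.mp h)]; ring
  have hσsq : σs ^ 2 = 1 := by
    rw [hσ]; split_ifs <;> norm_num
  have hE : d j * |y j| ≤ Λ + (1 / 2) * (d j) ^ 2 * s := by
    set u := Function.update bstar j (σs * s) with hu
    set c := (sortPerm u).symm j with hc
    have hvne : σs * s ≠ 0 := by
      rw [← abs_ne_zero, hσ_abs]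
      exact ne_of_gt hs_pos
    have hsupp : {k : Fin p | u k ≠ 0} = insert j S := by
      ext k
      simp only [Set.mem_setOf_eq, hu, Function.update_apply, Set.mem_insert_iff, hS]
      split_ifs with hkj'
      · simp [hkj', hvne]
      · simp [hkj']
    have hcard_u : {k : Fin p | u k ≠ 0}.ncard = r + 1 := by
      rw [hsupp, Set.ncard_insert_of_notMem hjS (Set.toFinite _), hcard]
    have hsorted_supp := sortedAbs_support u
    rw [hcard_u] at hsorted_supp
    have hcmem : (c : ℕ) < r + 1 := by
      have hval : sortedAbs u c = |σs * s| := by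
        rw [sortedAbs_apply, hc, Equiv.apply_symm_apply, hu, Function.update_self]
      have hmem : c ∈ {k : Fin p | sortedAbs u k ≠ 0} := by
        simp only [Set.mem_setOf_eq, hval, abs_ne_zero]
        exact hvne
      rw [hsorted_supp] at hmem
      exact hmem
    -- c cannot be < r
    have hcge : r ≤ (c : ℕ) := by
      by_contra hlt
      push_neg at hlt
      set k₀ : Fin p := ⟨r, hrltp⟩ with hk₀
      have hk₀mem : sortedAbs u k₀ ≠ 0 := by
        have : k₀ ∈ {k : Fin p | sortedAbs u k ≠ 0} := by
          rw [hsorted_supp]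
          simp [hk₀]
        exact this
      have hk₀ne : sortPerm u k₀ ≠ j := by
        intro h
        have : k₀ = c := by
          rw [hc, ← h, Equiv.symm_apply_apply]
        rw [← this] at hlt
        simp [hk₀] at hlt
      have hbne : bstar (sortPerm u k₀) ≠ 0 := by
        have h1 : u (sortPerm u k₀) ≠ 0 := by
          rw [sortedAbs_apply, abs_ne_zero] at hk₀mem
          exact hk₀mem
        rwa [hu, Function.update_of_ne hk₀ne] at h1
      have h2 : m ≤ sortedAbs u k₀ := by
        rw [sortedAbs_apply, hu, Function.update_of_ne hk₀ne]
        exact hm_le _ hbne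
      have h3 : sortedAbs u k₀ ≤ sortedAbs u c := by
        apply sortedAbs_antitone
        rw [Fin.le_def]
        simp [hk₀]
        omega
      have h4 : sortedAbs u c = s := by
        rw [sortedAbs_apply, hc, Equiv.apply_symm_apply, hu, Function.update_self, hσ_abs]
      rw [h4] at h3
      linarith
    have hΛc : lam c ≤ Λ := by
      apply hlam_anti
      rw [Fin.le_def]
      simpa using hcge
    have hkey := key_ineq d y lam hlam_anti bstar hbstar j (σs * s)
    rw [← hu, ← hc, hjS', hσ_abs, abs_zero, sub_zero] at hkey
    have e1 : (y j - d j * (0 : ℝ)) ^ 2 = y j ^ 2 := by ring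
    rw [e1] at hkey
    exact arithE (d j) (y j) s Λ (lam c) σs hdj hs_pos hσy hσsq hΛc hkey
  ------------------------------------------------------------------
  -- Contradiction
  ------------------------------------------------------------------
  have hdjs : (d j) ^ 2 * s ≤ (d i) ^ 2 * t / 4 := by
    have h4 : (0:ℝ) < 4 * (d j) ^ 2 := by positivity
    rw [le_div_iff₀ h4] at hs_le
    linarith
  exact SlopeAux.arithFinal (d i * |y i|) (d j * |y j|) Λ (d i) (d j) s t (hd i) ht hF hAB hE hdjs
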